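/- Let T be a finite connected graph with positive diameter Δ, and H a graph covered by a family 𝒴 of connected subgraphs each containing all connected subgraphs of H of diameter less than Δ + 2. Then Hom(T, H) = ⋃_{Y ∈ 𝒴} Hom(T, Y) as posets, i.e., every multi-homomorphism from T to H factors through some connected subgraph of H of diameter less than Δ + 2. -/

import Mathlib

/-- A graph: a symmetric relation on a vertex type (loops allowed). -/
structure SymRelGraph (V : Type*) where
  adj : V → V → Prop
  symm : ∀ {x y : V}, adj x y → adj y x

variable {V W U : Type*}

/-- `f` is a graph homomorphism from `G` to `H`. -/
def IsGraphHom (G : SymRelGraph V) (H : SymRelGraph W) (f : V → W) : Prop :=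
  ∀ {x y : V}, G.adj x y → H.adj (f x) (f y)

/-- The type of graph homomorphisms. -/
def GHom (G : SymRelGraph V) (H : SymRelGraph W) := {f : V → W // IsGraphHom G H f}

def GHom.id (G : SymRelGraph V) : GHom G G := ⟨fun x => x, fun h => h⟩

def GHom.comp {G : SymRelGraph V} {H : SymRelGraph W} {K : SymRelGraph U}
    (g : GHom H K) (f : GHom G H) : GHom G K :=
  ⟨fun x => g.1 (f.1 x), fun h => g.2 (f.2 h)⟩

/-- `η` is a multi-homomorphism from `G` to `H`. -/
def IsMultiHom (G : SymRelGraph V) (H : SymRelGraph W) (η : V → Set W) : Prop :=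
  (∀ x, (η x).Nonempty) ∧
    ∀ {x y}, G.adj x y → ∀ a ∈ η x, ∀ b ∈ η y, H.adj a b

/-- The Hom complex `Hom(G,H)`: the poset of multi-homomorphisms. -/
def MultiHom (G : SymRelGraph V) (H : SymRelGraph W) := {η : V → Set W // IsMultiHom G H η}

instance (G : SymRelGraph V) (H : SymRelGraph W) : PartialOrder (MultiHom G H) :=
  Subtype.partialOrder _

/-- A graph homomorphism regarded as a multi-homomorphism (pointwise singletons). -/
def GHom.toMulti {G : SymRelGraph V} {H : SymRelGraph W} (f : GHom G H) : MultiHom G H :=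
  ⟨fun x => {f.1 x}, fun x => ⟨f.1 x, rfl⟩, by
    intro x y h a ha b hb
    rw [Set.mem_singleton_iff] at ha hb
    subst ha; subst hb
    exact f.2 h⟩

/-- Two homomorphisms are ×-homotopic iff they lie in the same connected
component of the poset `Hom(G,H)`. -/
def XHomotopic {G : SymRelGraph V} {H : SymRelGraph W} (f g : GHom G H) : Prop :=
  Relation.ReflTransGen (fun η η' : MultiHom G H => η ≤ η' ∨ η' ≤ η)
    f.toMulti g.toMulti

/-- A walk of length `n` in `H` staying inside the vertex set `S`. -/
def WalkIn (H : SymRelGraph W) (S : Set W) (φ : ℕ → W) (n : ℕ) : Prop :=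
  (∀ i ≤ n, φ i ∈ S) ∧ ∀ i < n, H.adj (φ i) (φ (i + 1))

/-- Let `T` be a finite connected graph of positive diameter at most `Δ`.
Then every multi-homomorphism `η : T → H` factors through a connected
subgraph of `H` of diameter less than `Δ + 2`: its image is contained in a
nonempty vertex set `S` any two of whose vertices are joined inside `S` by a
walk of length at most `Δ + 1`. -/
theorem stmt_13 (T : SymRelGraph V) [Fintype V] (H : SymRelGraph W)
    (Δ : ℕ) (hΔ : 0 < Δ)
    (hpos : ∃ x y : V, x ≠ y)
    (hconn : ∀ x y : V, ∃ n ≤ Δ, ∃ φ : ℕ → V,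
      φ 0 = x ∧ φ n = y ∧ ∀ i < n, T.adj (φ i) (φ (i + 1)))
    (η : MultiHom T H) :
    ∃ S : Set W, S.Nonempty ∧ (∀ x : V, η.1 x ⊆ S) ∧
      ∀ a ∈ S, ∀ b ∈ S, ∃ n ≤ Δ + 1, ∃ φ : ℕ → W,
        WalkIn H S φ n ∧ φ 0 = a ∧ φ n = b := by
  classical
  set S : Set W := {w | ∃ x, w ∈ η.1 x} with hS
  -- a choice of an element of each η.1 t
  have hne := η.2.1
  let c : V → W := fun t => (hne t).choose
  have hc : ∀ t, c t ∈ η.1 t := fun t => (hne t).choose_spec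
  have hcS : ∀ t, c t ∈ S := fun t => ⟨t, hc t⟩
  -- every vertex of T has a neighbor
  have hnbr : ∀ x : V, ∃ z, T.adj x z := by
    intro x
    obtain ⟨u, v, huv⟩ := hpos
    obtain ⟨m, hm, φ, hφ0, hφm, hadj⟩ := hconn x u
    rcases Nat.eq_zero_or_pos m with h0 | h0
    · -- x = u, use walk to v
      have hxu : x = u := by rw [← hφ0, ← hφm, h0]
      obtain ⟨m', hm', ψ, hψ0, hψm, hadj'⟩ := hconn x v
      have h0' : 0 < m' := by
        rcases Nat.eq_zero_or_pos m' with h | h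
        · have hxv : x = v := by rw [← hψ0, ← hψm, h]
          exact absurd (hxu.symm.trans hxv) huv
        · exact h
      exact ⟨ψ 1, by rw [← hψ0]; exact hadj' 0 h0'⟩
    · exact ⟨φ 1, by rw [← hφ0]; exact hadj 0 h0⟩
  refine ⟨S, ?_, fun x w hw => ⟨x, hw⟩, ?_⟩
  · obtain ⟨u, _, _⟩ := hpos
    exact ⟨c u, hcS u⟩
  · rintro a ⟨x, ha⟩ b ⟨y, hb⟩
    obtain ⟨n, hn, φ, hφ0, hφn, hadj⟩ := hconn x y
    rcases Nat.eq_zero_or_pos n with h0 | h0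
    · -- x = y : use a neighbor to make a walk of length 2
      have hxy : x = y := by rw [← hφ0, ← hφn, h0]
      obtain ⟨z, hxz⟩ := hnbr x
      refine ⟨2, by omega, fun i => if i = 0 then a else if i = 1 then c z else b,
        ⟨?_, ?_⟩, by simp, by simp⟩
      · intro i _
        by_cases h1 : i = 0
        · simp [h1]; exact ⟨x, ha⟩
        · by_cases h2 : i = 1
          · simp [h1, h2, hcS z]
          · simp [h1, h2]; exact ⟨y, hb⟩
      · intro i hi
        interval_cases i
        · simpa using η.2.2 hxz a ha (c z) (hc z)
        · have := η.2.2 (T.symm hxz) (c z) (hc z) b (hxy ▸ hb)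
          simpa using this
    · -- n ≥ 1 : follow the walk in T
      set ψ : ℕ → W := fun i => if i = 0 then a else if i = n then b else c (φ i) with hψ
      have hmem : ∀ i ≤ n, ψ i ∈ η.1 (φ i) := by
        intro i hi
        by_cases h1 : i = 0
        · subst h1; simpa [hψ, hφ0] using ha
        · by_cases h2 : i = n
          · subst h2; simpa [hψ, h1, hφn] using hb
          · simpa [hψ, h1, h2] using hc (φ i)
      refine ⟨n, by omega, ψ, ⟨fun i hi => ⟨φ i, hmem i hi⟩, ?_⟩, ?_, ?_⟩
      · intro i hi
        exact η.2.2 (hadj i hi) _ (hmem i (le_of_lt hi)) _ (hmem (i + 1) hi)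
      · simp [hψ]
      · simp [hψ, Nat.pos_iff_ne_zero.mp h0]
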